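/- Conversely, with notation as above, suppose Φ : F₀¹ → F₀² is a *-algebra isomorphism fixing A pointwise and intertwining the G-actions (with G separating points of X). Then Z(χ) := Φ(U_χ)·V_χ* defines a map X → U(Z(A)) with Z(ι) = 1 such that ω₁(χ,χ') = ∂Z(χ,χ')·ω₂(χ,χ') for all χ, χ' ∈ X, where ∂Z(χ,χ') = Z(χ)β_χ(Z(χ'))Z(χχ')⁻¹. -/

import Mathlib

/-- ω is a generalized 2-cocycle for the system β of representatives:
unitary values, β_{χ₁}∘β_{χ₂} = Ad(ω(χ₁,χ₂))∘β_{χ₁χ₂}, normalization, cocycle equation. -/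
def IsGenCocycle {A : Type*} [NormedRing A] [StarRing A] [CStarRing A] [NormedAlgebra ℂ A]
    [CompleteSpace A] [StarModule ℂ A] {X : Type*} [Group X]
    (β : X → (A ≃⋆ₐ[ℂ] A)) (ω : X → X → A) : Prop :=
  (∀ χ₁ χ₂, ω χ₁ χ₂ ∈ unitary A) ∧
  (∀ χ₁ χ₂ (a : A), β χ₁ (β χ₂ a) = ω χ₁ χ₂ * β (χ₁ * χ₂) a * star (ω χ₁ χ₂)) ∧
  (∀ χ, ω 1 χ = 1 ∧ ω χ 1 = 1) ∧
  (∀ χ₁ χ₂ χ₃, ω χ₁ χ₂ * ω (χ₁ * χ₂) χ₃ = β χ₁ (ω χ₂ χ₃) * ω χ₁ (χ₂ * χ₃))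

/-- The twisted product on F₀, the free left A-module on {U_χ : χ ∈ X}:
(a₁U_{χ₁})·(a₂U_{χ₂}) = a₁·β_{χ₁}(a₂)·ω(χ₁,χ₂)·U_{χ₁χ₂}. -/
noncomputable def crossedMul {A : Type*} [NormedRing A] [StarRing A] [CStarRing A]
    [NormedAlgebra ℂ A] [CompleteSpace A] [StarModule ℂ A] {X : Type*} [Group X]
    (β : X → (A ≃⋆ₐ[ℂ] A)) (ω : X → X → A) (F G : X →₀ A) : X →₀ A :=
  F.sum fun χ₁ a₁ => G.sum fun χ₂ a₂ =>
    Finsupp.single (χ₁ * χ₂) (a₁ * β χ₁ a₂ * ω χ₁ χ₂)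

/-- The involution on F₀: (aU_χ)* = U_χ*·a* with U_χ* := ω(χ⁻¹,χ)*·U_{χ⁻¹}, i.e.
(aU_χ)* = ω(χ⁻¹,χ)*·β_{χ⁻¹}(a*)·U_{χ⁻¹}. -/
noncomputable def crossedStar {A : Type*} [NormedRing A] [StarRing A] [CStarRing A]
    [NormedAlgebra ℂ A] [CompleteSpace A] [StarModule ℂ A] {X : Type*} [Group X]
    (β : X → (A ≃⋆ₐ[ℂ] A)) (ω : X → X → A) (F : X →₀ A) : X →₀ A :=
  F.sum fun χ a => Finsupp.single χ⁻¹ (star (ω χ⁻¹ χ) * β χ⁻¹ (star a))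

/-- The dual action α_g(Σ_χ a_χU_χ) := Σ_χ χ(g)·a_χU_χ on F₀, for a pairing
e : G →* (X →* Circle). -/
noncomputable def dualAction {A : Type*} [NormedRing A] [StarRing A] [CStarRing A]
    [NormedAlgebra ℂ A] [CompleteSpace A] [StarModule ℂ A] {X : Type*} [CommGroup X]
    {G : Type*} [Group G] (e : G →* (X →* Circle)) (g : G) (F : X →₀ A) : X →₀ A :=
  F.sum fun χ a => Finsupp.single χ ((e g χ : ℂ) • a)


section Aux18

variable {A : Type*} [NormedRing A] [StarRing A] [CStarRing A] [NormedAlgebra ℂ A]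
    [CompleteSpace A] [StarModule ℂ A]

lemma crossedMul_single' {X : Type*} [Group X]
    (β : X → (A ≃⋆ₐ[ℂ] A)) (ω : X → X → A) (χ₁ χ₂ : X) (a₁ a₂ : A) :
    crossedMul β ω (Finsupp.single χ₁ a₁) (Finsupp.single χ₂ a₂)
      = Finsupp.single (χ₁ * χ₂) (a₁ * β χ₁ a₂ * ω χ₁ χ₂) := by
  unfold crossedMul
  rw [Finsupp.sum_single_index, Finsupp.sum_single_index] <;> simp

lemma crossedStar_single' {X : Type*} [Group X]
    (β : X → (A ≃⋆ₐ[ℂ] A)) (ω : X → X → A) (χ : X) (a : A) :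
    crossedStar β ω (Finsupp.single χ a)
      = Finsupp.single χ⁻¹ (star (ω χ⁻¹ χ) * β χ⁻¹ (star a)) := by
  unfold crossedStar
  rw [Finsupp.sum_single_index]
  simp

lemma dualAction_apply' {X : Type*} [CommGroup X]
    {G : Type*} [Group G] (e : G →* (X →* Circle)) (g : G) (F : X →₀ A) (χ' : X) :
    dualAction e g F χ' = (e g χ' : ℂ) • F χ' := by
  classical
  induction F using Finsupp.induction_linear with
  | zero => simp [dualAction]
  | add f₁ f₂ h₁ h₂ =>
      have hD : dualAction e g (f₁ + f₂) = dualAction e g f₁ + dualAction e g f₂ := by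
        unfold dualAction
        rw [Finsupp.sum_add_index] <;> simp [smul_add]
      rw [hD]
      simp [h₁, h₂, smul_add]
  | single χ a =>
      unfold dualAction
      rw [Finsupp.sum_single_index (by simp)]
      rw [Finsupp.single_apply, Finsupp.single_apply]
      split_ifs with h
      · subst h; rfl
      · simp

end Aux18

/-- conversely, if Φ : F₀¹ → F₀² is a *-algebra isomorphism fixing A
pointwise and intertwining the dual G-actions (G separating the points of X), then
Z(χ) := Φ(U_χ)·V_χ* is a central unitary of A with Z(ι) = 1 and ω₁ = ∂Z·ω₂. -/
theorem stmt18
    {A : Type*} [NormedRing A] [StarRing A] [CStarRing A] [NormedAlgebra ℂ A]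
    [CompleteSpace A] [StarModule ℂ A]
    {X : Type*} [CommGroup X]
    {G : Type*} [Group G]
    (β : X → (A ≃⋆ₐ[ℂ] A))
    (hβ1 : ∀ a : A, β 1 a = a)
    (ω₁ ω₂ : X → X → A)
    (hω₁ : IsGenCocycle β ω₁) (hω₂ : IsGenCocycle β ω₂)
    (e : G →* (X →* Circle))
    (hsep : ∀ χ : X, χ ≠ 1 → ∃ g : G, e g χ ≠ 1)
    (Φ : (X →₀ A) → (X →₀ A))
    (hadd : ∀ F₁ F₂ : X →₀ A, Φ (F₁ + F₂) = Φ F₁ + Φ F₂)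
    (hsmul : ∀ (c : ℂ) (F : X →₀ A), Φ (c • F) = c • Φ F)
    (hmul : ∀ F₁ F₂ : X →₀ A, Φ (crossedMul β ω₁ F₁ F₂) = crossedMul β ω₂ (Φ F₁) (Φ F₂))
    (hstar : ∀ F : X →₀ A, Φ (crossedStar β ω₁ F) = crossedStar β ω₂ (Φ F))
    (hbij : Function.Bijective Φ)
    (hfix : ∀ a : A, Φ (Finsupp.single 1 a) = Finsupp.single 1 a)
    (hint : ∀ (g : G) (F : X →₀ A), Φ (dualAction e g F) = dualAction e g (Φ F)) :
    ∃ z : X → A,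
      -- Z(χ) = Φ(U_χ)·V_χ* :
      (∀ χ : X, Finsupp.single (1 : X) (z χ) =
          crossedMul β ω₂ (Φ (Finsupp.single χ (1 : A)))
            (crossedStar β ω₂ (Finsupp.single χ (1 : A)))) ∧
      (∀ χ, z χ ∈ unitary A) ∧
      (∀ χ, z χ ∈ Set.center A) ∧
      z 1 = 1 ∧
      -- ω₁ = ∂Z·ω₂ :
      (∀ χ χ' : X, ω₁ χ χ' = z χ * β χ (z χ') * star (z (χ * χ')) * ω₂ χ χ') := by
  classical
  obtain ⟨hu₁, hc₁, hn₁, hcoc₁⟩ := hω₁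
  obtain ⟨hu₂, hc₂, hn₂, hcoc₂⟩ := hω₂
  -- the support of Φ (single χ a) is contained in {χ}
  have hsupp : ∀ (χ : X) (a : A) (χ' : X), χ' ≠ χ → Φ (Finsupp.single χ a) χ' = 0 := by
    intro χ a χ' hne
    by_contra hval
    have key : ∀ g : G, (e g χ : ℂ) • Φ (Finsupp.single χ a) χ'
        = (e g χ' : ℂ) • Φ (Finsupp.single χ a) χ' := by
      intro g
      have h1 := hint g (Finsupp.single χ a)
      have h2 : dualAction e g (Finsupp.single χ a) = (e g χ : ℂ) • Finsupp.single χ a := by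
        ext χ''
        rw [dualAction_apply', Finsupp.smul_apply, Finsupp.single_apply]
        split_ifs with h
        · subst h; rfl
        · simp
      rw [h2, hsmul] at h1
      have h3 := congrArg (fun F => F χ') h1
      simp only [Finsupp.smul_apply] at h3
      rw [dualAction_apply'] at h3
      exact h3
    have heq : ∀ g : G, e g χ = e g χ' := by
      intro g
      by_contra hc
      have h0 : ((e g χ : ℂ) - (e g χ')) • Φ (Finsupp.single χ a) χ' = 0 := by
        rw [sub_smul, key g, sub_self]
      rcases smul_eq_zero.mp h0 with h | h
      · exact hc (Subtype.ext (by linear_combination h))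
      · exact hval h
    obtain ⟨g, hg⟩ := hsep (χ * χ'⁻¹) (by
      intro h
      exact hne (by rw [mul_inv_eq_one] at h; exact h.symm))
    apply hg
    rw [map_mul, map_inv, heq g, mul_inv_cancel]
  have hdiag : ∀ (χ : X) (a : A),
      Φ (Finsupp.single χ a) = Finsupp.single χ (Φ (Finsupp.single χ a) χ) := by
    intro χ a
    ext χ'
    rw [Finsupp.single_apply]
    split_ifs with h
    · subst h; rfl
    · exact hsupp χ a χ' (fun hh => h hh.symm)
  set z : X → A := fun χ => Φ (Finsupp.single χ (1 : A)) χ with hzdef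
  have hΦU : ∀ χ : X, Φ (Finsupp.single χ (1 : A)) = Finsupp.single χ (z χ) :=
    fun χ => hdiag χ 1
  have hsing : ∀ (χ : X) (x y : A), Finsupp.single χ x = Finsupp.single χ y → x = y :=
    fun χ x y h => Finsupp.single_injective χ h
  -- Φ (single χ a) = single χ (a * z χ)
  have hPhi : ∀ (χ : X) (a : A), Φ (Finsupp.single χ a) = Finsupp.single χ (a * z χ) := by
    intro χ a
    have h1 : crossedMul β ω₁ (Finsupp.single 1 a) (Finsupp.single χ (1 : A))
        = Finsupp.single χ a := by
      rw [crossedMul_single', (hn₁ χ).1, hβ1, one_mul, mul_one, mul_one]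
    have h2 := hmul (Finsupp.single 1 a) (Finsupp.single χ (1 : A))
    rw [h1, hfix, hΦU] at h2
    rw [h2, crossedMul_single', (hn₂ χ).1, hβ1, one_mul, mul_one]
  -- centrality of z χ
  have hcen0 : ∀ (χ : X) (b : A), β χ b * z χ = z χ * β χ b := by
    intro χ b
    have h1 : crossedMul β ω₁ (Finsupp.single χ (1 : A)) (Finsupp.single 1 b)
        = Finsupp.single χ (β χ b) := by
      rw [crossedMul_single', (hn₁ χ).2, mul_one, mul_one, one_mul]
    have h2 := hmul (Finsupp.single χ (1 : A)) (Finsupp.single 1 b)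
    rw [h1, hfix, hΦU, hPhi, crossedMul_single', (hn₂ χ).2, mul_one, mul_one] at h2
    exact hsing _ _ _ h2
  have hcentral : ∀ (χ : X) (b : A), b * z χ = z χ * b := by
    intro χ b
    obtain ⟨c, rfl⟩ : ∃ c, β χ c = b := ⟨(β χ).symm b, (β χ).apply_symm_apply b⟩
    exact hcen0 χ c
  have hcentral' : ∀ (χ : X) (b : A), b * star (z χ) = star (z χ) * b := by
    intro χ b
    have h := congrArg star (hcentral χ (star b))
    simp only [star_mul, star_star] at h
    exact h.symm
  -- z 1 = 1
  have hz1 : z 1 = 1 := by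
    have h := congrArg (fun F => F (1 : X)) (hfix (1 : A))
    simpa using h
  -- star (z χ) * z χ = 1
  have hstarz : ∀ χ : X, star (z χ) * z χ = 1 := by
    intro χ
    obtain ⟨hw1, hw2⟩ := Unitary.mem_iff.mp (hu₂ χ⁻¹ χ)
    obtain ⟨hv1, hv2⟩ := Unitary.mem_iff.mp (hu₁ χ⁻¹ χ)
    have h1 : crossedMul β ω₁ (crossedStar β ω₁ (Finsupp.single χ (1 : A)))
        (Finsupp.single χ (1 : A)) = Finsupp.single 1 (1 : A) := by
      rw [crossedStar_single', crossedMul_single']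
      simp [hv1]
    have h2 := hmul (crossedStar β ω₁ (Finsupp.single χ (1 : A))) (Finsupp.single χ (1 : A))
    rw [h1, hfix, hstar, hΦU, crossedStar_single', crossedMul_single'] at h2
    simp only [inv_mul_cancel] at h2
    have h3 := (hsing _ _ _ h2).symm
    -- h3 : star (ω₂ χ⁻¹ χ) * β χ⁻¹ (star (z χ)) * β χ⁻¹ (z χ) * ω₂ χ⁻¹ χ = 1
    have h4 : star (ω₂ χ⁻¹ χ) * β χ⁻¹ (star (z χ) * z χ) * ω₂ χ⁻¹ χ = 1 := by
      rw [map_mul]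
      calc star (ω₂ χ⁻¹ χ) * (β χ⁻¹ (star (z χ)) * β χ⁻¹ (z χ)) * ω₂ χ⁻¹ χ
          = star (ω₂ χ⁻¹ χ) * β χ⁻¹ (star (z χ)) * β χ⁻¹ (z χ) * ω₂ χ⁻¹ χ := by
            simp only [mul_assoc]
        _ = 1 := h3
    have h5 : β χ⁻¹ (star (z χ) * z χ) = 1 := by
      calc β χ⁻¹ (star (z χ) * z χ)
          = ω₂ χ⁻¹ χ * (star (ω₂ χ⁻¹ χ) * β χ⁻¹ (star (z χ) * z χ) * ω₂ χ⁻¹ χ)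
              * star (ω₂ χ⁻¹ χ) := by
            rw [← mul_assoc, ← mul_assoc, hw2, one_mul, mul_assoc, hw2, mul_one]
        _ = ω₂ χ⁻¹ χ * 1 * star (ω₂ χ⁻¹ χ) := by rw [h4]
        _ = 1 := by rw [mul_one, hw2]
    apply (β χ⁻¹).injective
    rw [map_one]
    exact h5
  have hzz : ∀ χ : X, z χ * star (z χ) = 1 := by
    intro χ
    rw [hcentral' χ (z χ), hstarz]
  -- β χ (ω₂ χ⁻¹ χ) = ω₂ χ χ⁻¹
  have hsym : ∀ χ : X, β χ (ω₂ χ⁻¹ χ) = ω₂ χ χ⁻¹ := by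
    intro χ
    have h := hcoc₂ χ χ⁻¹ χ
    rw [mul_inv_cancel, inv_mul_cancel, (hn₂ χ).1, (hn₂ χ).2, mul_one, mul_one] at h
    exact h.symm
  refine ⟨z, ?_, ?_, ?_, hz1, ?_⟩
  · -- Z(χ) = Φ(U_χ)·V_χ*
    intro χ
    obtain ⟨hu, _⟩ := Unitary.mem_iff.mp (hu₂ χ χ⁻¹)
    rw [hΦU, crossedStar_single', crossedMul_single']
    have hβs : β χ (star (ω₂ χ⁻¹ χ) * β χ⁻¹ (star (1 : A))) = star (ω₂ χ χ⁻¹) := by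
      rw [star_one, map_one, mul_one, map_star, hsym χ]
    rw [hβs, mul_inv_cancel, mul_assoc, hu, mul_one]
  · -- unitarity
    intro χ
    exact Unitary.mem_iff.mpr ⟨hstarz χ, hzz χ⟩
  · -- centrality
    intro χ
    exact Semigroup.mem_center_iff.mpr (hcentral χ)
  · -- ω₁ = ∂Z·ω₂
    intro χ χ'
    have h1 : crossedMul β ω₁ (Finsupp.single χ (1 : A)) (Finsupp.single χ' (1 : A))
        = Finsupp.single (χ * χ') (ω₁ χ χ') := by
      rw [crossedMul_single', map_one, mul_one, one_mul]
    have h2 := hmul (Finsupp.single χ (1 : A)) (Finsupp.single χ' (1 : A))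
    rw [h1, hPhi, hΦU, hΦU, crossedMul_single'] at h2
    have h3 := hsing _ _ _ h2
    -- h3 : ω₁ χ χ' * z (χ * χ') = z χ * β χ (z χ') * ω₂ χ χ'
    calc ω₁ χ χ'
        = ω₁ χ χ' * (z (χ * χ') * star (z (χ * χ'))) := by rw [hzz, mul_one]
      _ = ω₁ χ χ' * z (χ * χ') * star (z (χ * χ')) := by rw [mul_assoc]
      _ = z χ * β χ (z χ') * ω₂ χ χ' * star (z (χ * χ')) := by rw [h3]
      _ = z χ * β χ (z χ') * star (z (χ * χ')) * ω₂ χ χ' := by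
          rw [mul_assoc (z χ * β χ (z χ')), mul_assoc (z χ * β χ (z χ')),
            hcentral' (χ * χ') (ω₂ χ χ')]
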